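/- Given any sequence (a_n) of positive real numbers, there exists a continuous function f : ℝ → ℂ such that the improper integral f̂(s) = ∫_{-∞}^{∞} e^{isx} f(x) dx converges for every s ∈ ℝ, and Re f̂(n) ≥ a_n for every positive integer n. -/

import Mathlib

open Filter Real Complex


noncomputable def tri (L x : ℝ) : ℝ := max 0 (1 - |x| / L)

lemma tri_continuous (L : ℝ) : Continuous (tri L) :=
  continuous_const.max (continuous_const.sub (continuous_abs.div_const L))

lemma tri_nonneg (L x : ℝ) : 0 ≤ tri L x := le_max_left _ _

lemma tri_le_one {L : ℝ} (hL : 0 < L) (x : ℝ) : tri L x ≤ 1 :=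
  max_le zero_le_one (by
    have : 0 ≤ |x| / L := div_nonneg (abs_nonneg x) hL.le
    linarith)

lemma tri_eq_zero {L x : ℝ} (hL : 0 < L) (h : L ≤ |x|) : tri L x = 0 := by
  apply max_eq_left
  rw [sub_nonpos, le_div_iff₀ hL, one_mul]
  exact h

lemma tri_eq {L x : ℝ} (hL : 0 < L) (h : |x| ≤ L) : tri L x = 1 - |x| / L := by
  apply max_eq_right
  rw [sub_nonneg, div_le_one hL]
  exact h

lemma tri_neg (L x : ℝ) : tri L (-x) = tri L x := by simp [tri]

lemma norm_exp_tIx (t x : ℝ) : ‖Complex.exp ((t:ℂ) * Complex.I * x)‖ = 1 := by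
  rw [show (t:ℂ) * Complex.I * x = ((t * x : ℝ) : ℂ) * Complex.I by push_cast; ring]
  exact Complex.norm_exp_ofReal_mul_I _

noncomputable def Gcc (t L : ℝ) (z : ℂ) : ℂ :=
  Complex.exp ((t:ℂ) * Complex.I * z) *
    ((-Complex.I / t) - (z * (-Complex.I / t) + 1 / (t:ℂ)^2) / (L:ℂ))

lemma Gcc_hasDerivAt {t L : ℝ} (ht : t ≠ 0) (hL : L ≠ 0) (z : ℂ) :
    HasDerivAt (Gcc t L) (Complex.exp ((t:ℂ) * Complex.I * z) * (1 - z / (L:ℂ))) z := by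
  have htc : (t:ℂ) ≠ 0 := Complex.ofReal_ne_zero.mpr ht
  have hLc : (L:ℂ) ≠ 0 := Complex.ofReal_ne_zero.mpr hL
  have h1 : HasDerivAt (fun z : ℂ => Complex.exp ((t:ℂ) * Complex.I * z))
      ((t:ℂ) * Complex.I * Complex.exp ((t:ℂ) * Complex.I * z)) z := by
    have := (Complex.hasDerivAt_exp ((t:ℂ) * Complex.I * z)).comp z
      (((hasDerivAt_id z).const_mul ((t:ℂ) * Complex.I)))
    simpa [Function.comp_def, mul_comm] using this
  have h2 : HasDerivAt (fun z : ℂ =>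
      ((-Complex.I / t) - (z * (-Complex.I / t) + 1 / (t:ℂ)^2) / (L:ℂ)))
      (-((-Complex.I / t) / (L:ℂ))) z := by
    have h3 : HasDerivAt (fun z : ℂ => z * (-Complex.I / t) + 1 / (t:ℂ)^2)
        ((1:ℂ) * (-Complex.I / t)) z :=
      ((hasDerivAt_id z).mul_const (-Complex.I / (t:ℂ))).add_const (1 / (t:ℂ)^2)
    rw [one_mul] at h3
    simpa using (h3.div_const (L:ℂ)).const_sub (-Complex.I / (t:ℂ))
  have key := h1.mul h2
  have coeff : (t:ℂ) * Complex.I * (-Complex.I / t - (z * (-Complex.I / t) + 1 / (t:ℂ)^2) / L)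
      + -(-Complex.I / t / L) = 1 - z / (L:ℂ) := by
    field_simp [htc, hLc]
    ring_nf
    simp only [Complex.I_sq]
    field_simp [htc, hLc]
    ring
  refine key.congr_deriv ?_
  rw [show (t:ℂ) * Complex.I * Complex.exp ((t:ℂ) * Complex.I * z) *
        (-Complex.I / t - (z * (-Complex.I / t) + 1 / (t:ℂ)^2) / L) +
        Complex.exp ((t:ℂ) * Complex.I * z) * -(-Complex.I / t / L)
      = Complex.exp ((t:ℂ) * Complex.I * z) *
        ((t:ℂ) * Complex.I * (-Complex.I / t - (z * (-Complex.I / t) + 1 / (t:ℂ)^2) / L)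
          + -(-Complex.I / t / L)) by ring, coeff]

lemma half_eq {t L R : ℝ} (ht : t ≠ 0) (hL : 0 < L) (hR0 : 0 ≤ R) (hRL : R ≤ L) :
    ∫ x in (0:ℝ)..R, Complex.exp ((t:ℂ) * Complex.I * x) * (tri L x : ℂ)
      = Gcc t L R - Gcc t L 0 := by
  have h1 : ∫ x in (0:ℝ)..R, Complex.exp ((t:ℂ) * Complex.I * x) * (tri L x : ℂ)
      = ∫ x in (0:ℝ)..R, Complex.exp ((t:ℂ) * Complex.I * x) * (1 - (x:ℂ) / L) := by
    apply intervalIntegral.integral_congr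
    intro x hx
    rw [Set.uIcc_of_le hR0] at hx
    have hx0 : 0 ≤ x := hx.1
    have hxL : |x| ≤ L := by rw [_root_.abs_of_nonneg hx0]; linarith [hx.2]
    simp only
    rw [tri_eq hL hxL, _root_.abs_of_nonneg hx0]
    push_cast
    ring
  rw [h1]
  have := intervalIntegral.integral_eq_sub_of_hasDerivAt
    (f := fun y : ℝ => Gcc t L y)
    (f' := fun x : ℝ => Complex.exp ((t:ℂ) * Complex.I * x) * (1 - (x:ℂ) / L))
    (a := 0) (b := R)
    (fun x _ => (Gcc_hasDerivAt ht hL.ne' x).comp_ofReal)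
    (by apply Continuous.intervalIntegrable; fun_prop)
  simpa using this

lemma norm_Gcc_le {t L : ℝ} (ht : 1 ≤ |t|) (hL : 1 ≤ L) {x : ℝ} (hx0 : 0 ≤ x) (hxL : x ≤ L) :
    ‖Gcc t L x‖ ≤ 3 := by
  have ht0 : (0:ℝ) < |t| := lt_of_lt_of_le one_pos ht
  have hL0 : (0:ℝ) < L := lt_of_lt_of_le one_pos hL
  have hexp : ‖Complex.exp ((t:ℂ) * Complex.I * (x:ℂ))‖ = 1 := norm_exp_tIx t x
  unfold Gcc
  rw [norm_mul, hexp, one_mul]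
  have e1 : ‖-Complex.I / (t:ℂ)‖ = 1 / |t| := by
    simp [norm_div]
  have e2 : ‖((x:ℝ):ℂ) * (-Complex.I / (t:ℂ)) + 1 / ((t:ℂ))^2‖ ≤ |x| / |t| + 1 / |t|^2 := by
    refine (norm_add_le _ _).trans ?_
    gcongr
    · rw [norm_mul, e1, Complex.norm_real]
      rw [Real.norm_eq_abs]
      ring_nf
      try exact le_refl _
    · rw [norm_div, norm_one, norm_pow, Complex.norm_real, Real.norm_eq_abs]
  calc ‖-Complex.I / (t:ℂ) - (((x:ℝ):ℂ) * (-Complex.I / (t:ℂ)) + 1 / ((t:ℂ))^2) / (L:ℂ)‖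
      ≤ ‖-Complex.I / (t:ℂ)‖ + ‖(((x:ℝ):ℂ) * (-Complex.I / (t:ℂ)) + 1 / ((t:ℂ))^2) / (L:ℂ)‖ :=
        norm_sub_le _ _
    _ ≤ 1 / |t| + (|x| / |t| + 1 / |t|^2) / L := by
        rw [e1]
        gcongr
        rw [norm_div, Complex.norm_real, Real.norm_eq_abs, abs_of_pos hL0]
        gcongr
        try exact e2
    _ ≤ 3 := by
        have h1 : 1 / |t| ≤ 1 := by rw [div_le_one ht0]; exact ht
        have h2 : |x| / |t| ≤ L := by
          rw [_root_.abs_of_nonneg hx0]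
          calc x / |t| ≤ x / 1 := by gcongr
            _ = x := div_one x
            _ ≤ L := hxL
        have h3 : 1 / |t|^2 ≤ 1 := by
          rw [div_le_one (by positivity)]
          nlinarith
        have h4 : (|x| / |t| + 1 / |t|^2) / L ≤ (L + 1) / L := by gcongr
        have h5 : (L + 1) / L = 1 + 1 / L := by field_simp
        have h6 : 1 / L ≤ 1 := by rw [div_le_one hL0]; exact hL
        rw [h5] at h4
        linarith

noncomputable def JJ (t L R : ℝ) : ℂ :=
  ∫ x in (-R)..R, Complex.exp ((t:ℂ) * Complex.I * x) * (tri L x : ℂ)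

lemma JJ_integrand_continuous (t L : ℝ) :
    Continuous (fun x : ℝ => Complex.exp ((t:ℂ) * Complex.I * x) * (tri L x : ℂ)) := by
  apply Continuous.mul
  · fun_prop
  · exact Complex.continuous_ofReal.comp (tri_continuous L)

lemma JJ_split (t L R : ℝ) :
    JJ t L R = (∫ x in (0:ℝ)..R, Complex.exp (((-t:ℝ):ℂ) * Complex.I * x) * (tri L x : ℂ))
      + ∫ x in (0:ℝ)..R, Complex.exp ((t:ℂ) * Complex.I * x) * (tri L x : ℂ) := by
  have hcont := JJ_integrand_continuous t L
  have hadd := intervalIntegral.integral_add_adjacent_intervals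
    (μ := MeasureTheory.volume) (a := -R) (b := 0) (c := R)
    (hcont.intervalIntegrable _ _) (hcont.intervalIntegrable _ _)
  rw [JJ, ← hadd]
  congr 1
  have key : (∫ x in (0:ℝ)..R, Complex.exp ((t:ℂ) * Complex.I * (-x : ℝ)) * (tri L (-x) : ℂ))
      = ∫ x in (-R)..(0:ℝ), Complex.exp ((t:ℂ) * Complex.I * x) * (tri L x : ℂ) := by
    rw [intervalIntegral.integral_comp_neg
      (fun x => Complex.exp ((t:ℂ) * Complex.I * x) * (tri L x : ℂ))]
    norm_num
  rw [← key]
  apply intervalIntegral.integral_congr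
  intro x _
  simp only
  rw [tri_neg]
  congr 2
  push_cast
  ring

lemma half_bound {t L R : ℝ} (ht : 1 ≤ |t|) (hL : 1 ≤ L) (hR0 : 0 ≤ R) (hRL : R ≤ L) :
    ‖∫ x in (0:ℝ)..R, Complex.exp ((t:ℂ) * Complex.I * x) * (tri L x : ℂ)‖ ≤ 6 := by
  have ht0 : t ≠ 0 := by intro h; rw [h] at ht; simp at ht; linarith
  have hL0 : (0:ℝ) < L := lt_of_lt_of_le one_pos hL
  rw [half_eq ht0 hL0 hR0 hRL]
  calc ‖Gcc t L R - Gcc t L 0‖ ≤ ‖Gcc t L R‖ + ‖Gcc t L 0‖ := norm_sub_le _ _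
    _ ≤ 3 + 3 := add_le_add (norm_Gcc_le ht hL hR0 hRL) (norm_Gcc_le ht hL le_rfl hL0.le)
    _ = 6 := by norm_num

lemma JJ_trunc {t L R : ℝ} (hL : 0 < L) (h : L ≤ R) : JJ t L R = JJ t L L := by
  have hcont := JJ_integrand_continuous t L
  have h1 : (∫ x in (-R)..(-L), Complex.exp ((t:ℂ) * Complex.I * x) * (tri L x : ℂ)) = 0 := by
    rw [show (0:ℂ) = ∫ x in (-R)..(-L), (0:ℂ) by simp]
    apply intervalIntegral.integral_congr
    intro x hx
    rw [Set.uIcc_of_le (by linarith)] at hx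
    simp only
    rw [tri_eq_zero hL (by rw [abs_of_nonpos (show x ≤ 0 by linarith [hx.2])]; linarith [hx.2])]
    simp
  have h2 : (∫ x in (L:ℝ)..R, Complex.exp ((t:ℂ) * Complex.I * x) * (tri L x : ℂ)) = 0 := by
    rw [show (0:ℂ) = ∫ x in (L:ℝ)..R, (0:ℂ) by simp]
    apply intervalIntegral.integral_congr
    intro x hx
    rw [Set.uIcc_of_le (by linarith)] at hx
    simp only
    rw [tri_eq_zero hL (by rw [_root_.abs_of_nonneg (show (0:ℝ) ≤ x by linarith [hx.1])]; linarith [hx.1])]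
    simp
  have hadd1 := intervalIntegral.integral_add_adjacent_intervals
    (μ := MeasureTheory.volume) (a := -R) (b := -L) (c := R)
    (hcont.intervalIntegrable _ _) (hcont.intervalIntegrable _ _)
  have hadd2 := intervalIntegral.integral_add_adjacent_intervals
    (μ := MeasureTheory.volume) (a := -L) (b := L) (c := R)
    (hcont.intervalIntegrable _ _) (hcont.intervalIntegrable _ _)
  simp only [JJ]
  rw [← hadd1, ← hadd2, h1, h2]
  ring

lemma JJ_bound {t L R : ℝ} (ht : 1 ≤ |t|) (hL : 1 ≤ L) (hR : 0 ≤ R) : ‖JJ t L R‖ ≤ 12 := by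
  have hL0 : (0:ℝ) < L := lt_of_lt_of_le one_pos hL
  rcases le_total R L with hRL | hLR
  · rw [JJ_split]
    calc ‖_ + _‖ ≤ ‖(∫ x in (0:ℝ)..R, Complex.exp (((-t:ℝ):ℂ) * Complex.I * x) * (tri L x : ℂ))‖
        + ‖∫ x in (0:ℝ)..R, Complex.exp ((t:ℂ) * Complex.I * x) * (tri L x : ℂ)‖ := norm_add_le _ _
      _ ≤ 6 + 6 := add_le_add (half_bound (by rwa [abs_neg]) hL hR hRL) (half_bound ht hL hR hRL)
      _ = 12 := by norm_num
  · rw [JJ_trunc hL0 hLR]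
    rw [JJ_split]
    calc ‖_ + _‖ ≤ ‖(∫ x in (0:ℝ)..L, Complex.exp (((-t:ℝ):ℂ) * Complex.I * x) * (tri L x : ℂ))‖
        + ‖∫ x in (0:ℝ)..L, Complex.exp ((t:ℂ) * Complex.I * x) * (tri L x : ℂ)‖ := norm_add_le _ _
      _ ≤ 6 + 6 := add_le_add (half_bound (by rwa [abs_neg]) hL hL0.le le_rfl)
          (half_bound ht hL hL0.le le_rfl)
      _ = 12 := by norm_num

lemma JJ_small {t L R : ℝ} (hL : 0 < L) (hR : 0 ≤ R) : ‖JJ t L R‖ ≤ 2 * L := by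
  have key : ∀ R', 0 ≤ R' → R' ≤ L → ‖JJ t L R'‖ ≤ 2 * L := by
    intro R' h0 h1
    have := intervalIntegral.norm_integral_le_of_norm_le_const
      (C := 1) (a := -R') (b := R')
      (f := fun x => Complex.exp ((t:ℂ) * Complex.I * x) * (tri L x : ℂ)) ?_
    · rw [JJ]
      refine this.trans ?_
      rw [one_mul]
      rw [_root_.abs_of_nonneg (show (0:ℝ) ≤ R' - -R' by linarith)]
      linarith
    · intro x _
      rw [norm_mul, norm_exp_tIx, one_mul, Complex.norm_real, Real.norm_eq_abs,
        _root_.abs_of_nonneg (tri_nonneg L x)]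
      exact tri_le_one hL x
  rcases le_total R L with hRL | hLR
  · exact key R hR hRL
  · rw [JJ_trunc hL hLR]; exact key L hL.le le_rfl

lemma JJ_value {t L : ℝ} (ht : t ≠ 0) (hL : 0 < L) :
    JJ t L L = ((2 * (1 - Real.cos (t * L))) / (t^2 * L) : ℝ) := by
  have hnt : (-t:ℝ) ≠ 0 := neg_ne_zero.mpr ht
  have htc : (t:ℂ) ≠ 0 := Complex.ofReal_ne_zero.mpr ht
  have hLc : (L:ℂ) ≠ 0 := Complex.ofReal_ne_zero.mpr hL.ne'
  rw [JJ_split, half_eq ht hL hL.le le_rfl, half_eq hnt hL hL.le le_rfl]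
  unfold Gcc
  have h1 : (t:ℂ) * Complex.I * (L:ℂ) = ((t*L : ℝ):ℂ) * Complex.I := by push_cast; ring
  have h2 : ((-t:ℝ):ℂ) * Complex.I * (L:ℂ) = (-(t*L : ℝ):ℝ) * Complex.I := by push_cast; ring
  rw [h1, h2]
  rw [Complex.ofReal_neg, neg_mul, Complex.exp_mul_I,
    show Complex.exp (-(((t*L:ℝ):ℂ) * Complex.I)) = Complex.exp ((-((t*L:ℝ):ℂ)) * Complex.I) by
      rw [neg_mul],
    Complex.exp_mul_I, Complex.cos_neg, Complex.sin_neg,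
    ← Complex.ofReal_cos, ← Complex.ofReal_sin]
  simp only [mul_zero, Complex.exp_zero]
  push_cast
  field_simp [htc, hLc]
  ring_nf

lemma hasDerivAt_triAnti {L : ℝ} (hL : 0 < L) (x : ℝ) :
    HasDerivAt (fun y : ℝ => y - y^2 / (2*L)) (1 - x / L) x := by
  have h := (hasDerivAt_id x).sub ((hasDerivAt_pow 2 x).div_const (2*L))
  refine h.congr_deriv ?_
  field_simp
  ring

lemma tri_half_integral {L : ℝ} (hL : 0 < L) :
    ∫ x in (0:ℝ)..L, tri L x = L / 2 := by
  have h1 : ∫ x in (0:ℝ)..L, tri L x = ∫ x in (0:ℝ)..L, (1 - x / L) := by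
    apply intervalIntegral.integral_congr
    intro x hx
    rw [Set.uIcc_of_le hL.le] at hx
    rw [tri_eq hL (by rw [_root_.abs_of_nonneg hx.1]; exact hx.2), _root_.abs_of_nonneg hx.1]
  rw [h1, intervalIntegral.integral_eq_sub_of_hasDerivAt
    (f := fun y : ℝ => y - y^2 / (2*L)) (fun x _ => hasDerivAt_triAnti hL x)
    (by apply Continuous.intervalIntegrable; fun_prop)]
  field_simp
  ring

lemma JJ_zero {L : ℝ} (hL : 0 < L) : JJ 0 L L = (L:ℂ) := by
  rw [JJ_split]
  have he : ∀ u : ℝ, ∀ x : ℝ, Complex.exp ((u:ℂ) * Complex.I * x) * (tri L x : ℂ)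
      = Complex.exp ((u:ℂ) * Complex.I * x) * (tri L x : ℂ) := fun _ _ => rfl
  have h0 : ∀ x : ℝ, Complex.exp (((0:ℝ):ℂ) * Complex.I * x) * (tri L x : ℂ) = (tri L x : ℂ) := by
    intro x; simp
  have hneg0 : ∀ x : ℝ, Complex.exp (((-(0:ℝ)):ℂ) * Complex.I * x) * (tri L x : ℂ) = (tri L x : ℂ) := by
    intro x; simp
  have e2 : (∫ x in (0:ℝ)..L, Complex.exp (((0:ℝ):ℂ) * Complex.I * x) * (tri L x : ℂ))
      = ∫ x in (0:ℝ)..L, (tri L x : ℂ) :=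
    intervalIntegral.integral_congr (fun x _ => h0 x)
  simp only [neg_zero]
  rw [e2, intervalIntegral.integral_ofReal, tri_half_integral hL]
  push_cast
  ring

theorem stmt9 (a : ℕ → ℝ) (ha : ∀ n, 0 < a n) :
    ∃ f : ℝ → ℂ, Continuous f ∧ ∃ fhat : ℝ → ℂ,
      (∀ s : ℝ, Tendsto
        (fun R : ℝ => ∫ x in (-R)..R, Complex.exp (((s * x : ℝ) : ℂ) * Complex.I) * f x)
        atTop (nhds (fhat s))) ∧
      (∀ n : ℕ, 0 < n → a n ≤ (fhat n).re) := by
  classical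
  set c : ℕ → ℝ := fun n => (1/2)^n with hc_def
  set L : ℕ → ℝ := fun n => 2^n * a n + 1 with hL_def
  have hc_pos : ∀ n, 0 < c n := fun n => by positivity
  have hc_sum : Summable c := summable_geometric_of_lt_one (by norm_num) (by norm_num)
  have hL_one : ∀ n, 1 ≤ L n := by
    intro n
    have h1 : (0:ℝ) < 2^n := by positivity
    have := ha n
    simp only [hL_def]
    nlinarith
  have hL_pos : ∀ n, 0 < L n := fun n => lt_of_lt_of_le one_pos (hL_one n)
  have hcL : ∀ n, a n ≤ c n * L n := by
    intro n
    have h2 : c n * 2^n = 1 := by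
      simp only [hc_def]
      rw [← mul_pow]
      norm_num
    have h3 : c n * L n = a n + c n := by
      simp only [hL_def]
      calc c n * (2^n * a n + 1) = (c n * 2^n) * a n + c n := by ring
        _ = a n + c n := by rw [h2]; ring
    rw [h3]
    linarith [hc_pos n]
  set g : ℕ → ℝ → ℂ := fun n x =>
    (c n : ℂ) * (Complex.exp (((-(n:ℝ) : ℝ):ℂ) * Complex.I * x) * (tri (L n) x : ℂ)) with hg_def
  have hg_cont : ∀ n, Continuous (g n) := by
    intro n
    exact continuous_const.mul (JJ_integrand_continuous (-(n:ℝ)) (L n))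
  have hg_norm : ∀ n x, ‖g n x‖ ≤ c n := by
    intro n x
    simp only [hg_def]
    rw [norm_mul, norm_mul, norm_exp_tIx, one_mul, Complex.norm_real, Complex.norm_real,
      Real.norm_eq_abs, Real.norm_eq_abs, _root_.abs_of_nonneg (hc_pos n).le,
      _root_.abs_of_nonneg (tri_nonneg _ _)]
    calc c n * tri (L n) x ≤ c n * 1 :=
        mul_le_mul_of_nonneg_left (tri_le_one (hL_pos n) x) (hc_pos n).le
      _ = c n := mul_one _
  set f : ℝ → ℂ := fun x => ∑' n, g n x with hf_def
  have hf_cont : Continuous f := continuous_tsum hg_cont hc_sum hg_norm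
  have hkey : ∀ (s : ℝ) (k : ℕ) (x : ℝ),
      Complex.exp (((s * x : ℝ) : ℂ) * Complex.I) * g k x
        = (c k : ℂ) * (Complex.exp ((((s - k : ℝ)):ℂ) * Complex.I * x) * (tri (L k) x : ℂ)) := by
    intro s k x
    simp only [hg_def]
    have hexp : Complex.exp (((s * x : ℝ) : ℂ) * Complex.I)
        * Complex.exp (((-(k:ℝ) : ℝ):ℂ) * Complex.I * x)
        = Complex.exp ((((s - k : ℝ)):ℂ) * Complex.I * x) := by
      rw [← Complex.exp_add]
      congr 1
      push_cast
      ring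
    calc Complex.exp (((s * x : ℝ) : ℂ) * Complex.I)
          * ((c k : ℂ) * (Complex.exp (((-(k:ℝ) : ℝ):ℂ) * Complex.I * x) * (tri (L k) x : ℂ)))
        = (c k : ℂ) * ((Complex.exp (((s * x : ℝ) : ℂ) * Complex.I)
            * Complex.exp (((-(k:ℝ) : ℝ):ℂ) * Complex.I * x)) * (tri (L k) x : ℂ)) := by ring
      _ = (c k : ℂ) * (Complex.exp ((((s - k : ℝ)):ℂ) * Complex.I * x) * (tri (L k) x : ℂ)) := by
          rw [hexp]
  have hterm_int : ∀ (s : ℝ) (k : ℕ) (R : ℝ),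
      (∫ x in (-R)..R, Complex.exp (((s * x : ℝ) : ℂ) * Complex.I) * g k x)
        = (c k : ℂ) * JJ (s - k) (L k) R := by
    intro s k R
    rw [JJ, ← intervalIntegral.integral_const_mul]
    exact intervalIntegral.integral_congr (fun x _ => hkey s k x)
  have hswap : ∀ (s R : ℝ), 0 ≤ R →
      (∫ x in (-R)..R, Complex.exp (((s * x : ℝ) : ℂ) * Complex.I) * f x)
        = ∑' k, (c k : ℂ) * JJ (s - k) (L k) R := by
    intro s R hR
    have h1 : ∀ x : ℝ, Complex.exp (((s * x : ℝ) : ℂ) * Complex.I) * f x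
        = ∑' k, Complex.exp (((s * x : ℝ) : ℂ) * Complex.I) * g k x := by
      intro x
      simp only [hf_def]
      exact tsum_mul_left.symm
    rw [intervalIntegral.integral_congr (g := fun x =>
        ∑' k, Complex.exp (((s * x : ℝ) : ℂ) * Complex.I) * g k x) (fun x _ => h1 x)]
    have hmeas : ∀ k, MeasureTheory.IntegrableOn
        (fun x : ℝ => Complex.exp (((s * x : ℝ) : ℂ) * Complex.I) * g k x)
        (Set.Ioc (-R) R) MeasureTheory.volume := by
      intro k
      apply Continuous.integrableOn_Ioc
      exact (Complex.continuous_exp.comp (by fun_prop)).mul (hg_cont k)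
    have hnorm : ∀ k, ∀ x : ℝ, ‖Complex.exp (((s * x : ℝ) : ℂ) * Complex.I) * g k x‖ ≤ c k := by
      intro k x
      rw [norm_mul, Complex.norm_exp_ofReal_mul_I, one_mul]
      exact hg_norm k x
    have hintnorm : ∀ k, (∫ x in Set.Ioc (-R) R,
        ‖Complex.exp (((s * x : ℝ) : ℂ) * Complex.I) * g k x‖) ≤ c k * (2 * R) := by
      intro k
      have h2 : (∫ x in Set.Ioc (-R) R,
          ‖Complex.exp (((s * x : ℝ) : ℂ) * Complex.I) * g k x‖)
          ≤ ∫ _x in Set.Ioc (-R) R, (c k) := by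
        apply MeasureTheory.setIntegral_mono_on (hmeas k).norm
          ((MeasureTheory.integrableOn_const_iff).mpr (Or.inr (by
            rw [Real.volume_Ioc]; exact ENNReal.ofReal_lt_top)))
          measurableSet_Ioc
        intro x _
        exact hnorm k x
      refine h2.trans ?_
      rw [MeasureTheory.setIntegral_const, Real.volume_real_Ioc_of_le (by linarith), smul_eq_mul]
      nlinarith [hc_pos k]
    rw [intervalIntegral.integral_of_le (by linarith : -R ≤ R)]
    rw [← MeasureTheory.integral_tsum_of_summable_integral_norm hmeas
      (Summable.of_nonneg_of_le
        (fun k => MeasureTheory.integral_nonneg (fun x => norm_nonneg _))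
        hintnorm (hc_sum.mul_right (2 * R)))]
    apply tsum_congr
    intro k
    rw [← intervalIntegral.integral_of_le (by linarith : -R ≤ R)]
    exact hterm_int s k R
  set bound : ℝ → ℕ → ℝ := fun s k =>
    if |s - (k:ℝ)| < 1 then c k * (2 * L k) else c k * 12 with hbound_def
  have hJJbound : ∀ (s R : ℝ), 0 ≤ R → ∀ k : ℕ,
      ‖(c k : ℂ) * JJ (s - k) (L k) R‖ ≤ bound s k := by
    intro s R hR k
    rw [norm_mul, Complex.norm_real, Real.norm_eq_abs, _root_.abs_of_nonneg (hc_pos k).le]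
    simp only [hbound_def]
    split_ifs with h
    · exact mul_le_mul_of_nonneg_left (JJ_small (hL_pos k) hR) (hc_pos k).le
    · push_neg at h
      exact mul_le_mul_of_nonneg_left (JJ_bound h (hL_one k) hR) (hc_pos k).le
  have hbound_sum : ∀ s : ℝ, Summable (bound s) := by
    intro s
    have heq : bound s = fun k : ℕ =>
        (if |s - (k:ℝ)| < 1 then c k * (2 * L k) - c k * 12 else 0) + c k * 12 := by
      funext k
      simp only [hbound_def]
      split_ifs <;> ring
    rw [heq]
    apply Summable.add
    · apply summable_of_ne_finset_zero (s := Finset.range ⌈s + 1⌉₊)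
      intro k hk
      rw [Finset.mem_range, not_lt] at hk
      have h1 : s + 1 ≤ (k:ℝ) := le_trans (Nat.le_ceil _) (by exact_mod_cast hk)
      rw [if_neg (by rw [not_lt]; rw [abs_sub_comm]; rw [le_abs]; left; linarith)]
    · exact hc_sum.mul_right 12
  set fhat : ℝ → ℂ := fun s => ∑' k, (c k : ℂ) * JJ (s - k) (L k) (L k) with hfhat_def
  refine ⟨f, hf_cont, fhat, ?_, ?_⟩
  · intro s
    have main : Tendsto (fun R => ∑' k, (c k : ℂ) * JJ (s - k) (L k) R) atTop (nhds (fhat s)) := by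
      apply tendsto_tsum_of_dominated_convergence (hbound_sum s)
      · intro k
        have hev : ∀ᶠ R in (atTop : Filter ℝ),
            (fun _ : ℝ => (c k : ℂ) * JJ (s - k) (L k) (L k)) R
              = (c k : ℂ) * JJ (s - k) (L k) R := by
          filter_upwards [eventually_ge_atTop (L k)] with R hR
          rw [JJ_trunc (hL_pos k) hR]
        exact Tendsto.congr' hev tendsto_const_nhds
      · filter_upwards [eventually_ge_atTop (0:ℝ)] with R hR k
        exact hJJbound s R hR k
    apply main.congr'
    filter_upwards [eventually_ge_atTop (0:ℝ)] with R hR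
    exact (hswap s R hR).symm
  · intro n hn
    have hsumn : Summable (fun k => (c k : ℂ) * JJ ((n:ℝ) - k) (L k) (L k)) := by
      apply Summable.of_norm_bounded (hbound_sum (n:ℝ))
      intro k
      exact hJJbound (n:ℝ) (L k) (hL_pos k).le k
    have hre : (fhat (n:ℝ)).re = ∑' k, ((c k : ℂ) * JJ ((n:ℝ) - k) (L k) (L k)).re := by
      simp only [hfhat_def]
      exact Complex.re_tsum hsumn
    have hterm_nonneg : ∀ k : ℕ, k ≠ n →
        0 ≤ ((c k : ℂ) * JJ ((n:ℝ) - k) (L k) (L k)).re := by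
      intro k hk
      have ht : (n:ℝ) - k ≠ 0 := by
        rw [sub_ne_zero]
        exact_mod_cast fun h => hk (by exact_mod_cast h.symm)
      rw [JJ_value ht (hL_pos k), ← Complex.ofReal_mul, Complex.ofReal_re]
      have h1 : Real.cos (((n:ℝ) - k) * L k) ≤ 1 := Real.cos_le_one _
      have h2 : (0:ℝ) ≤ 2 * (1 - Real.cos (((n:ℝ) - k) * L k)) := by linarith
      exact mul_nonneg (hc_pos k).le
        (div_nonneg h2 (mul_nonneg (sq_nonneg _) (hL_pos k).le))
    have hmain : a n ≤ ((c n : ℂ) * JJ ((n:ℝ) - n) (L n) (L n)).re := by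
      rw [sub_self, JJ_zero (hL_pos n), ← Complex.ofReal_mul, Complex.ofReal_re]
      exact hcL n
    have hsum_re : Summable (fun k => ((c k : ℂ) * JJ ((n:ℝ) - k) (L k) (L k)).re) :=
      (Complex.hasSum_re hsumn.hasSum).summable
    rw [hre]
    exact hmain.trans (Summable.le_tsum hsum_re n (fun j hj => hterm_nonneg j hj))
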